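/- For every real q with 1/√2 ≤ q < 1, there exists a sequence of signs (ε_i) ∈ {1,-1}^ℕ such that ε_{2k-1} + ε_{2k} = 0 for every k ≥ 1 and ∑_{i=1}^∞ ε_i q^i = 0. -/
import Mathlib
noncomputable def Ssig (r : ℝ) : ℕ → ℝ
  | 0 => 0
  | n + 1 => Ssig r n + (if Ssig r n ≤ 0 then 1 else -1) * r ^ (n + 1)

noncomputable def sg (r : ℝ) (n : ℕ) : ℝ := if Ssig r n ≤ 0 then 1 else -1

lemma sg_cases (r : ℝ) (n : ℕ) : sg r n = 1 ∨ sg r n = -1 := by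
  unfold sg; split <;> simp

lemma Ssig_partial (r : ℝ) (n : ℕ) :
    ∑ k ∈ Finset.range n, sg r k * r ^ (k + 1) = Ssig r n := by
  induction n with
  | zero => simp [Ssig]
  | succ n ih => rw [Finset.sum_range_succ, ih]; rfl

lemma Ssig_bound (r : ℝ) (hr : 1 / 2 ≤ r) (n : ℕ) : |Ssig r n| ≤ r ^ n := by
  have hr0 : (0:ℝ) ≤ r := by linarith
  induction n with
  | zero => simp [Ssig]
  | succ n ih =>
    have hpw : (0:ℝ) ≤ r ^ n := pow_nonneg hr0 n
    have h2 : r ^ n ≤ 2 * r ^ (n + 1) := by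
      rw [pow_succ]; nlinarith
    rw [abs_le] at ih ⊢
    show -r ^ (n+1) ≤ Ssig r n + (if Ssig r n ≤ 0 then 1 else -1) * r ^ (n + 1) ∧
        Ssig r n + (if Ssig r n ≤ 0 then 1 else -1) * r ^ (n + 1) ≤ r ^ (n+1)
    split
    · constructor <;> nlinarith [ih.1, ih.2]
    · next h =>
      push_neg at h
      constructor <;> nlinarith [ih.1, ih.2]

lemma sg_summable (r : ℝ) (hr : 1 / 2 ≤ r) (hr1 : r < 1) :
    Summable (fun k => sg r k * r ^ (k + 1)) := by
  have hr0 : (0:ℝ) ≤ r := by linarith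
  have hg : Summable (fun k : ℕ => r ^ (k + 1)) :=
    ((summable_geometric_of_lt_one hr0 hr1).mul_left r).congr
      (fun k => by rw [pow_succ, mul_comm])
  refine Summable.of_abs (hg.of_nonneg_of_le (fun k => abs_nonneg _) fun k => ?_)
  rw [abs_mul, abs_pow, abs_of_nonneg hr0]
  rcases sg_cases r k with h | h <;> simp [h]

lemma sg_hasSum (r : ℝ) (hr : 1 / 2 ≤ r) (hr1 : r < 1) :
    HasSum (fun k => sg r k * r ^ (k + 1)) 0 := by
  have hr0 : (0:ℝ) ≤ r := by linarith
  rw [(sg_summable r hr hr1).hasSum_iff_tendsto_nat]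
  refine squeeze_zero_norm (fun n => ?_) (tendsto_pow_atTop_nhds_zero_of_lt_one hr0 hr1)
  rw [Ssig_partial, Real.norm_eq_abs]
  exact Ssig_bound r hr n

theorem boundedly_fair_division_exists (q : ℝ) (hq : 1 / Real.sqrt 2 ≤ q) (hq1 : q < 1) :
    ∃ ε : ℕ → ℝ, (∀ i, 1 ≤ i → ε i = 1 ∨ ε i = -1) ∧
      (∀ k : ℕ, 1 ≤ k → ε (2 * k - 1) + ε (2 * k) = 0) ∧
      ∑' i : ℕ, ε (i + 1) * q ^ (i + 1) = 0 := by
  have hs2 : (0:ℝ) < Real.sqrt 2 := Real.sqrt_pos.mpr (by norm_num)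
  have hq0 : 0 < q := lt_of_lt_of_le (by positivity) hq
  set r : ℝ := q ^ 2 with hrdef
  have hr1 : r < 1 := by nlinarith
  have hr : 1 / 2 ≤ r := by
    have h := mul_le_mul hq hq (by positivity) hq0.le
    have h2 : (1 / Real.sqrt 2) * (1 / Real.sqrt 2) = 1 / 2 := by
      rw [div_mul_div_comm, one_mul, Real.mul_self_sqrt (by norm_num)]
    rw [h2] at h
    nlinarith
  refine ⟨fun i => if i % 2 = 1 then sg r ((i - 1) / 2) else -sg r ((i - 1) / 2), ?_, ?_, ?_⟩
  · intro i _
    rcases sg_cases r ((i - 1) / 2) with h | h <;>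
      by_cases hi : i % 2 = 1 <;> simp [hi, h]
  · intro k hk
    have h1 : (2 * k - 1) % 2 = 1 := by omega
    have h2 : (2 * k) % 2 = 0 := by omega
    have h3 : (2 * k - 1 - 1) / 2 = k - 1 := by omega
    have h4 : (2 * k - 1) / 2 = k - 1 := by omega
    simp [h1, h2, h3, h4]
  · have hev : HasSum (fun k : ℕ =>
        (if (2 * k + 1) % 2 = 1 then sg r ((2 * k + 1 - 1) / 2) else -sg r ((2 * k + 1 - 1) / 2))
          * q ^ (2 * k + 1)) 0 := by
      have h0 := (sg_hasSum r hr hr1).mul_left (q / r)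
      rw [mul_zero] at h0
      refine h0.congr_fun fun k => ?_
      have h1 : (2 * k + 1) % 2 = 1 := by omega
      have h2 : (2 * k + 1 - 1) / 2 = k := by omega
      have hrne : r ≠ 0 := by positivity
      rw [h2]
      simp only [h1, if_pos]
      rw [hrdef]
      field_simp
      ring
    have hod : HasSum (fun k : ℕ =>
        (if (2 * k + 1 + 1) % 2 = 1 then sg r ((2 * k + 1 + 1 - 1) / 2)
          else -sg r ((2 * k + 1 + 1 - 1) / 2)) * q ^ (2 * k + 1 + 1)) 0 := by
      have h0 := (sg_hasSum r hr hr1).mul_left (-1)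
      rw [mul_zero] at h0
      refine h0.congr_fun fun k => ?_
      have h1 : (2 * k + 1 + 1) % 2 = 0 := by omega
      have h2 : (2 * k + 1 + 1 - 1) / 2 = k := by omega
      have h1' : ¬((2 * k + 1 + 1) % 2 = 1) := by omega
      rw [h2, if_neg h1', hrdef]
      ring
    have key := tsum_even_add_odd (f := fun i : ℕ =>
        (if (i + 1) % 2 = 1 then sg r ((i + 1 - 1) / 2)
          else -sg r ((i + 1 - 1) / 2)) * q ^ (i + 1))
      hev.summable hod.summable
    rw [hev.tsum_eq, hod.tsum_eq, add_zero] at key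
    exact key.symm
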